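/- Let H be a complex Hilbert space, 𝔄 a C*-algebra acting on H, σ : 𝔄 → B(H) a *-linear map, and d : 𝔄 → B(H) a continuous σ-derivation. Then there exists a continuous linear map Σ : 𝔄 → B(H) such that d is a Σ-derivation, i.e., d(AB) = d(A)Σ(B) + Σ(A)d(B) for all A, B ∈ 𝔄. -/

import Mathlib

open Filter Topology

set_option maxHeartbeats 2000000 in
/-- **Theorem 3.3.** Let `𝔄` be a C*-algebra acting on a Hilbert space `H`,
`σ : 𝔄 → B(H)` a `*`-linear map and `d : 𝔄 → B(H)` a continuous `σ`-derivation.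
Then there is a continuous linear map `Σ : 𝔄 → B(H)` such that `d` is a
`Σ`-derivation. -/
theorem stmt_8 {H : Type*} [NormedAddCommGroup H] [InnerProductSpace ℂ H]
    [CompleteSpace H]
    (𝔄 : NonUnitalStarSubalgebra ℂ (H →L[ℂ] H))
    (hcl : IsClosed (𝔄 : Set (H →L[ℂ] H)))
    (σ d : 𝔄 →ₗ[ℂ] (H →L[ℂ] H))
    (hσ_star : ∀ A : 𝔄, σ (star A) = star (σ A))
    (hd_cont : Continuous d)
    (hd : ∀ A B : 𝔄, d (A * B) = d A * σ B + σ A * d B) :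
    ∃ Sig : 𝔄 →ₗ[ℂ] (H →L[ℂ] H), Continuous Sig ∧
      (∀ A B : 𝔄, d (A * B) = d A * Sig B + Sig A * d B) := by
  classical
  haveI : CompleteSpace 𝔄 := hcl.completeSpace_coe
  -- the common kernel N and the closed span of ranges M
  set N : Submodule ℂ H := ⨅ B : 𝔄, LinearMap.ker (d B : H →ₗ[ℂ] H) with hNdef
  have hNclosed : IsClosed (N : Set H) := by
    have h : (N : Set H) = ⋂ B : 𝔄, (LinearMap.ker (d B : H →ₗ[ℂ] H) : Set H) := by
      simp [hNdef, Submodule.coe_iInf]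
    rw [h]
    exact isClosed_iInter fun B => ContinuousLinearMap.isClosed_ker (d B)
  haveI : CompleteSpace N := hNclosed.completeSpace_coe
  set M : Submodule ℂ H := (⨆ B : 𝔄, LinearMap.range (d B : H →ₗ[ℂ] H)).topologicalClosure with hMdef
  haveI : CompleteSpace M :=
    (⨆ B : 𝔄, LinearMap.range (d B : H →ₗ[ℂ] H)).isClosed_topologicalClosure.completeSpace_coe
  set pN : H →L[ℂ] H := N.subtypeL.comp N.orthogonalProjectionOnto with hpNdef
  set pM : H →L[ℂ] H := M.subtypeL.comp M.orthogonalProjectionOnto with hpMdef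
  have pN_mem : ∀ x, pN x ∈ N := fun x => SetLike.coe_mem _
  have pM_mem : ∀ x, pM x ∈ M := fun x => SetLike.coe_mem _
  have pN_self : ∀ {x}, x ∈ N → pN x = x := fun h => Submodule.starProjection_eq_self_iff.mpr h
  have pM_self : ∀ {x}, x ∈ M → pM x = x := fun h => Submodule.starProjection_eq_self_iff.mpr h
  have pN_idem : ∀ x, pN (pN x) = pN x := fun x => pN_self (pN_mem x)
  have pM_idem : ∀ x, pM (pM x) = pM x := fun x => pM_self (pM_mem x)
  have d_pN : ∀ (B : 𝔄) (x : H), d B (pN x) = 0 := by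
    intro B x
    have h1 : pN x ∈ LinearMap.ker (d B : H →ₗ[ℂ] H) := by
      have h2 := pN_mem x
      rw [hNdef, Submodule.mem_iInf] at h2
      exact h2 B
    exact LinearMap.mem_ker.mp h1
  have d_memM : ∀ (B : 𝔄) (x : H), d B x ∈ M := by
    intro B x
    refine Submodule.le_topologicalClosure _ ?_
    exact Submodule.mem_iSup_of_mem B ⟨x, rfl⟩
  have pM_d : ∀ (B : 𝔄) (x : H), pM (d B x) = d B x := fun B x => pM_self (d_memM B x)
  -- the modified map Sig
  set Sig : 𝔄 →ₗ[ℂ] (H →L[ℂ] H) :=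
    { toFun := fun C => (1 - pN) * σ C + pN * (σ C * pM)
      map_add' := by
        intro a b
        simp only [map_add, mul_add, add_mul]
        abel
      map_smul' := by
        intro c a
        simp only [map_smul, mul_smul_comm, smul_mul_assoc, RingHom.id_apply, smul_add] }
    with hSigdef
  have Sig_apply : ∀ (C : 𝔄) (x : H),
      Sig C x = σ C x - pN (σ C x) + pN (σ C (pM x)) := by
    intro C x
    simp [hSigdef, ContinuousLinearMap.mul_apply, ContinuousLinearMap.sub_apply,
      ContinuousLinearMap.add_apply, ContinuousLinearMap.one_apply, sub_mul, one_mul]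
  -- key operator identities
  have Sig_mul_d : ∀ C B : 𝔄, Sig C * d B = σ C * d B := by
    intro C B
    ext x
    simp only [ContinuousLinearMap.mul_apply, Sig_apply, pM_d]
    abel
  have d_mul_Sig : ∀ B C : 𝔄, d B * Sig C = d B * σ C := by
    intro B C
    ext x
    simp only [ContinuousLinearMap.mul_apply, Sig_apply, map_add, map_sub, d_pN]
    abel
  have pN_Sig : ∀ (C : 𝔄), pN * (Sig C * (1 - pM)) = 0 := by
    intro C
    ext x
    have h1 : pM (x - pM x) = 0 := by
      rw [map_sub, pM_idem, sub_self]
    simp only [ContinuousLinearMap.mul_apply, ContinuousLinearMap.sub_apply,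
      ContinuousLinearMap.one_apply, ContinuousLinearMap.zero_apply]
    rw [Sig_apply, h1, map_zero, map_add, map_sub, pN_idem, sub_self, zero_add]; simp
  refine ⟨Sig, ?_, ?_⟩
  · -- continuity via the closed graph theorem
    apply Sig.continuous_of_seq_closed_graph
    intro u x y hu hy
    set v : ℕ → 𝔄 := fun n => u n - x with hvdef
    have hv : Tendsto v atTop (𝓝 0) := by
      simpa [hvdef, sub_self] using hu.sub_const x
    have hSv : Tendsto (fun n => Sig (v n)) atTop (𝓝 (y - Sig x)) := by
      have h := hy.sub_const (Sig x)
      simpa [hvdef, map_sub, Function.comp] using h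
    set T : H →L[ℂ] H := y - Sig x with hTdef
    have hdv : Tendsto (fun n => d (v n)) atTop (𝓝 0) := by
      have h := (hd_cont.tendsto 0).comp hv
      simpa [map_zero, Function.comp_def] using h
    suffices hT : T = 0 by
      exact sub_eq_zero.mp hT
    -- limit identities for T
    have h1 : ∀ B : 𝔄, T * d B = 0 := by
      intro B
      have lim1 : Tendsto (fun n => Sig (v n) * d B) atTop (𝓝 (T * d B)) :=
        hSv.mul tendsto_const_nhds
      have heq : ∀ n, Sig (v n) * d B = d (v n * B) - d (v n) * σ B := by
        intro n
        rw [Sig_mul_d]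
        exact eq_sub_of_add_eq' (hd (v n) B).symm
      have lim2 : Tendsto (fun n => Sig (v n) * d B) atTop (𝓝 0) := by
        have hvB : Tendsto (fun n => v n * B) atTop (𝓝 0) := by
          simpa using hv.mul (tendsto_const_nhds (x := B))
        have t1 : Tendsto (fun n => d (v n * B)) atTop (𝓝 0) := by
          have h := (hd_cont.tendsto 0).comp hvB
          simpa [map_zero, Function.comp_def] using h
        have t2 : Tendsto (fun n => d (v n) * σ B) atTop (𝓝 0) := by
          simpa using hdv.mul (tendsto_const_nhds (x := σ B))
        have := t1.sub t2
        simp only [sub_zero] at this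
        simpa [heq] using this
      exact tendsto_nhds_unique lim1 lim2
    have h2 : ∀ B : 𝔄, d B * T = 0 := by
      intro B
      have lim1 : Tendsto (fun n => d B * Sig (v n)) atTop (𝓝 (d B * T)) :=
        tendsto_const_nhds.mul hSv
      have heq : ∀ n, d B * Sig (v n) = d (B * v n) - σ B * d (v n) := by
        intro n
        rw [d_mul_Sig]
        exact eq_sub_of_add_eq (hd B (v n)).symm
      have lim2 : Tendsto (fun n => d B * Sig (v n)) atTop (𝓝 0) := by
        have hBv : Tendsto (fun n => B * v n) atTop (𝓝 0) := by
          simpa using (tendsto_const_nhds (x := B)).mul hv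
        have t1 : Tendsto (fun n => d (B * v n)) atTop (𝓝 0) := by
          have h := (hd_cont.tendsto 0).comp hBv
          simpa [map_zero, Function.comp_def] using h
        have t2 : Tendsto (fun n => σ B * d (v n)) atTop (𝓝 0) := by
          simpa using (tendsto_const_nhds (x := σ B)).mul hdv
        have := t1.sub t2
        simp only [sub_zero] at this
        simpa [heq] using this
      exact tendsto_nhds_unique lim1 lim2
    have h3 : pN * (T * (1 - pM)) = 0 := by
      have lim1 : Tendsto (fun n => pN * (Sig (v n) * (1 - pM)))
          atTop (𝓝 (pN * (T * (1 - pM)))) :=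
        tendsto_const_nhds.mul (hSv.mul tendsto_const_nhds)
      have lim2 : Tendsto (fun n => pN * (Sig (v n) * (1 - pM))) atTop (𝓝 0) := by
        simpa [pN_Sig] using (tendsto_const_nhds :
          Tendsto (fun _ : ℕ => (0 : H →L[ℂ] H)) atTop (𝓝 0))
      exact tendsto_nhds_unique lim1 lim2
    -- conclude T = 0
    have hTmem : ∀ x, T x ∈ N := by
      intro z
      rw [hNdef, Submodule.mem_iInf]
      intro B
      rw [LinearMap.mem_ker]
      have h := congrArg (fun S : H →L[ℂ] H => S z) (h2 B)
      simpa [ContinuousLinearMap.mul_apply] using h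
    have hTP : ∀ z, T (pM z) = 0 := by
      have hker : M ≤ LinearMap.ker (T : H →ₗ[ℂ] H) := by
        rw [hMdef]
        refine Submodule.topologicalClosure_minimal _ ?_ (ContinuousLinearMap.isClosed_ker T)
        refine iSup_le fun B => ?_
        rintro w ⟨z, rfl⟩
        rw [LinearMap.mem_ker]
        have h := congrArg (fun S : H →L[ℂ] H => S z) (h1 B)
        simpa [ContinuousLinearMap.mul_apply] using h
      intro z
      exact LinearMap.mem_ker.mp (hker (pM_mem z))
    ext z
    have e1 : pN (T z) = T z := pN_self (hTmem z)
    have e2 : pN (T (z - pM z)) = 0 := by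
      have h := congrArg (fun S : H →L[ℂ] H => S z) h3
      simpa [ContinuousLinearMap.mul_apply, ContinuousLinearMap.sub_apply,
        ContinuousLinearMap.one_apply] using h
    rw [map_sub, hTP z, sub_zero] at e2
    simpa [e1] using e2
  · -- the derivation identity
    intro A B
    rw [hd A B, Sig_mul_d, d_mul_Sig]
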